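/- arXiv:2503.09545 — 3 statements merged into one kernel-verified Lean document; each statement's English description precedes it below -/
import Mathlib

section
/- Corollary (forward optimality preservation): if a plan π optimally solves the STRIPS planning task P, then there exists a plan π' that optimally solves the commit task P_c, and c(π') = c(π). -/
/-- A STRIPS action: positive/negative preconditions, add/delete effects, nonnegative cost. -/
structure StripsAction (α : Type*) where
  prePos : Set α
  preNeg : Set α
  add : Set α
  del : Set α
  cost : NNReal

variable {α : Type*}

/-- An action is applicable in state `s` iff `pre⁺ ⊆ s` and `pre⁻ ∩ s = ∅`. -/
def StripsAction.Applicable (a : StripsAction α) (s : Set α) : Prop :=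
  a.prePos ⊆ s ∧ a.preNeg ∩ s = ∅

/-- Result of applying an action: `γ(s,a) = (s \ del(a)) ∪ add(a)`. -/
def StripsAction.apply (a : StripsAction α) (s : Set α) : Set α :=
  (s \ a.del) ∪ a.add

/-- `Γ(s, π)`: the state resulting from applying the sequence `π` in `s`. -/
def seqResult (s : Set α) : List (StripsAction α) → Set α
  | [] => s
  | a :: π => seqResult (a.apply s) π

/-- A sequence of actions is applicable in `s` if each action is applicable in the
state resulting from the previous ones. -/
def SeqApplicable (s : Set α) : List (StripsAction α) → Prop
  | [] => True
  | a :: π => a.Applicable s ∧ SeqApplicable (a.apply s) π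

/-- Cost of a plan: sum of the costs of its actions. -/
def planCost (π : List (StripsAction α)) : NNReal :=
  (π.map StripsAction.cost).sum

/-- A STRIPS planning task `P = ⟨F, A, I, G⟩`. -/
structure StripsTask (α : Type*) where
  F : Set α
  A : Set (StripsAction α)
  I : Set α
  G : Set α

/-- Well-formedness of a STRIPS planning task: `F` and `A` finite, `I ⊆ F`, `G ⊆ F`,
all action components within `F`, and `add(a) ∩ del(a) = ∅`. -/
def StripsTask.WellFormed (T : StripsTask α) : Prop :=
  T.F.Finite ∧ T.A.Finite ∧ T.I ⊆ T.F ∧ T.G ⊆ T.F ∧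
    ∀ a ∈ T.A, a.prePos ⊆ T.F ∧ a.preNeg ⊆ T.F ∧ a.add ⊆ T.F ∧ a.del ⊆ T.F ∧
      a.add ∩ a.del = ∅

/-- A plan for a task: a sequence of actions of the task, applicable in `I`,
whose result satisfies `G`. -/
def StripsTask.IsPlan (T : StripsTask α) (π : List (StripsAction α)) : Prop :=
  (∀ a ∈ π, a ∈ T.A) ∧ SeqApplicable T.I π ∧ T.G ⊆ seqResult T.I π

/-- A task is solvable if it has a plan. -/
def StripsTask.Solvable (T : StripsTask α) : Prop := ∃ π, T.IsPlan π

/-- An optimal plan: a plan of minimal cost among all plans. -/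
def StripsTask.OptimalPlan (T : StripsTask α) (π : List (StripsAction α)) : Prop :=
  T.IsPlan π ∧ ∀ π₂, T.IsPlan π₂ → planCost π ≤ planCost π₂

/-- Pending goals: `Ḡ = {g ∈ G \ I | ∃ a ∈ A, g ∈ add(a)}`. -/
def pending (T : StripsTask α) : Set α :=
  {g | g ∈ T.G \ T.I ∧ ∃ a ∈ T.A, g ∈ a.add}

/-- The map `g ↦ g-commit` introduces fresh fluents: it is injective on the pending
goals and its values on them avoid `F`. -/
def FreshCommit (T : StripsTask α) (commit : α → α) : Prop :=
  Set.InjOn commit (pending T) ∧ ∀ g ∈ pending T, commit g ∉ T.F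

/-- Commit version of an action `a ∈ A^G` for a subset `i ⊆ add(a) ∩ Ḡ`. -/
def commitAction (commit : α → α) (a : StripsAction α) (i : Set α) : StripsAction α :=
  ⟨a.prePos, a.preNeg ∪ commit '' i, a.add ∪ commit '' i, a.del, a.cost⟩

/-- Force-commit version of an action `a ∈ A^¬G`. -/
def forceCommitAction (commit : α → α) (Gbar : Set α) (a : StripsAction α) : StripsAction α :=
  ⟨a.prePos, a.preNeg ∪ commit '' (a.del ∩ Gbar), a.add, a.del, a.cost⟩

/-- Simultaneous version of an action `a ∈ A^G*` for a subset `j ⊆ add(a) ∩ Ḡ`. -/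
def simAction (commit : α → α) (Gbar : Set α) (a : StripsAction α) (j : Set α) : StripsAction α :=
  ⟨a.prePos, a.preNeg ∪ commit '' j ∪ commit '' (a.del ∩ Gbar),
    a.add ∪ commit '' j, a.del, a.cost⟩

/-- `CompiledFrom T commit a' a` holds iff `a'` is one of the actions of the commit
task built from the original action `a ∈ A`, i.e. `ρ(a') = a`. -/
def CompiledFrom (T : StripsTask α) (commit : α → α) (a' a : StripsAction α) : Prop :=
  a ∈ T.A ∧
    ((a.add ∩ pending T ≠ ∅ ∧ a.del ∩ pending T = ∅ ∧
        ∃ i ⊆ a.add ∩ pending T, a' = commitAction commit a i) ∨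
     (a.add ∩ pending T = ∅ ∧ a.del ∩ pending T ≠ ∅ ∧
        a' = forceCommitAction commit (pending T) a) ∨
     (a.add ∩ pending T ≠ ∅ ∧ a.del ∩ pending T ≠ ∅ ∧
        ∃ j ⊆ a.add ∩ pending T, a' = simAction commit (pending T) a j) ∨
     (a.add ∩ pending T = ∅ ∧ a.del ∩ pending T = ∅ ∧ a' = a))

/-- The commit planning task `P_c = ⟨F ∪ F', A_c, I, G_c⟩`. -/
def commitTask (T : StripsTask α) (commit : α → α) : StripsTask α :=
  ⟨T.F ∪ commit '' pending T,
   {a' | ∃ a, CompiledFrom T commit a' a},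
   T.I,
   (T.G \ pending T) ∪ commit '' pending T⟩

open Set

section CommitAux

variable {α : Type*}

lemma fresh_disj {T : StripsTask α} {commit : α → α} (hfresh : FreshCommit T commit)
    {S : Set α} (hS : S ⊆ pending T) : commit '' S ∩ T.F = ∅ := by
  ext x
  simp only [mem_inter_iff, mem_image, mem_empty_iff_false, iff_false, not_and]
  rintro ⟨g, hg, rfl⟩ hxF
  exact hfresh.2 g (hS hg) hxF

lemma mem_of_commit_mem {T : StripsTask α} {commit : α → α} (hfresh : FreshCommit T commit)
    {S : Set α} (hS : S ⊆ pending T) {g : α} (hg : g ∈ pending T)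
    (h : commit g ∈ commit '' S) : g ∈ S := by
  obtain ⟨g', hg', he⟩ := h
  rwa [← hfresh.1 (hS hg') hg he]

/-- The set of pending goals committed at action `a` given the remaining plan `rest`:
those added by `a` and never touched later. -/
def commitSet (Gbar : Set α) (a : StripsAction α) (rest : List (StripsAction α)) : Set α :=
  {g | (g ∈ a.add ∧ g ∈ Gbar) ∧ ∀ b ∈ rest, g ∉ b.add ∧ g ∉ b.del}

lemma commitSet_subset (Gbar : Set α) (a : StripsAction α) (rest : List (StripsAction α)) :
    commitSet Gbar a rest ⊆ a.add ∩ Gbar := fun _ hg => hg.1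

/-- Forward translation of a plan into the commit task. -/
def fwd (commit : α → α) (Gbar : Set α) : List (StripsAction α) → List (StripsAction α)
  | [] => []
  | a :: rest => simAction commit Gbar a (commitSet Gbar a rest) :: fwd commit Gbar rest

lemma fwd_mem {T : StripsTask α} {commit : α → α} {a : StripsAction α}
    (rest : List (StripsAction α)) (ha : a ∈ T.A) :
    simAction commit (pending T) a (commitSet (pending T) a rest) ∈ (commitTask T commit).A := by
  refine ⟨a, ha, ?_⟩
  by_cases hadd : a.add ∩ pending T = ∅
  · have hi : commitSet (pending T) a rest = ∅ := by
      rw [← subset_empty_iff, ← hadd]; exact commitSet_subset _ _ _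
    by_cases hdel : a.del ∩ pending T = ∅
    · exact Or.inr (Or.inr (Or.inr ⟨hadd, hdel, by
        simp [simAction, hi, hdel]⟩))
    · exact Or.inr (Or.inl ⟨hadd, hdel, by
        simp [simAction, forceCommitAction, hi]⟩)
  · by_cases hdel : a.del ∩ pending T = ∅
    · exact Or.inl ⟨hadd, hdel, commitSet (pending T) a rest, commitSet_subset _ _ _, by
        simp [simAction, commitAction, hdel]⟩
    · exact Or.inr (Or.inr (Or.inl ⟨hadd, hdel, commitSet (pending T) a rest,
        commitSet_subset _ _ _, rfl⟩))

lemma fwd_mem_all {T : StripsTask α} {commit : α → α} :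
    ∀ π : List (StripsAction α), (∀ a ∈ π, a ∈ T.A) →
      ∀ b ∈ fwd commit (pending T) π, b ∈ (commitTask T commit).A
  | [], _, b, hb => by simp [fwd] at hb
  | a :: rest, h, b, hb => by
    simp only [fwd] at hb
    rcases List.mem_cons.mp hb with rfl | hb'
    · exact fwd_mem rest (h a (List.mem_cons_self))
    · exact fwd_mem_all rest (fun c hc => h c (List.mem_cons_of_mem _ hc)) b hb'

lemma fwd_cost (commit : α → α) (Gbar : Set α) :
    ∀ π : List (StripsAction α), planCost (fwd commit Gbar π) = planCost π
  | [] => rfl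
  | a :: rest => by
    simp only [fwd, planCost, List.map_cons, List.sum_cons]
    have := fwd_cost commit Gbar rest
    simp only [planCost] at this
    rw [this]; rfl

lemma fwd_sim {T : StripsTask α} {commit : α → α}
    (hwf : T.WellFormed) (hfresh : FreshCommit T commit) :
    ∀ (π : List (StripsAction α)) (s D : Set α),
      (∀ a ∈ π, a ∈ T.A) → SeqApplicable s π → s ⊆ T.F → D ⊆ pending T →
      (∀ g ∈ D, ∀ b ∈ π, g ∉ b.add ∧ g ∉ b.del) →
      SeqApplicable (s ∪ commit '' D) (fwd commit (pending T) π) ∧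
      ∃ D', D ⊆ D' ∧ D' ⊆ pending T ∧
        seqResult (s ∪ commit '' D) (fwd commit (pending T) π) = seqResult s π ∪ commit '' D' ∧
        (∀ g ∈ pending T, g ∈ seqResult s π →
          g ∈ D' ∨ (g ∈ s ∧ ∀ b ∈ π, g ∉ b.add ∧ g ∉ b.del))
  | [], s, D, hA, happ, hsF, hD, hDun => by
    refine ⟨trivial, D, subset_rfl, hD, rfl, fun g hg hgs => Or.inr ⟨hgs, by simp⟩⟩
  | a :: rest, s, D, hA, happ, hsF, hD, hDun => by
    have haA : a ∈ T.A := hA a (List.mem_cons_self)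
    obtain ⟨hpreP, hpreN, haddF, hdelF, hadddel⟩ := hwf.2.2.2.2 a haA
    obtain ⟨⟨hap1, hap2⟩, happ'⟩ := happ
    set Gbar := pending T
    set i := commitSet Gbar a rest with hi_def
    have hiG : i ⊆ Gbar := fun g hg => hg.1.2
    have hiAdd : i ⊆ a.add := fun g hg => hg.1.1
    set a' := simAction commit Gbar a i with ha'_def
    set s₁ := a.apply s with hs1
    -- applicability of a'
    have hfr : ∀ (S : Set α), S ⊆ Gbar → ∀ x ∈ commit '' S, x ∉ T.F := by
      intro S hS x hx hxF
      have := fresh_disj hfresh hS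
      rw [eq_empty_iff_forall_notMem] at this
      exact this x ⟨hx, hxF⟩
    have hap'2 : a'.preNeg ∩ (s ∪ commit '' D) = ∅ := by
      rw [eq_empty_iff_forall_notMem]
      rintro x ⟨hx1, hx2⟩
      have hx1' : x ∈ a.preNeg ∨ x ∈ commit '' i ∨ x ∈ commit '' (a.del ∩ Gbar) := by
        rcases hx1 with (h | h) | h
        · exact Or.inl h
        · exact Or.inr (Or.inl h)
        · exact Or.inr (Or.inr h)
      rcases hx1' with h | h | h
      · rcases hx2 with hx2 | hx2
        · rw [eq_empty_iff_forall_notMem] at hap2; exact hap2 x ⟨h, hx2⟩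
        · exact hfr D hD x hx2 (hpreN h)
      · rcases hx2 with hx2 | hx2
        · exact hfr i hiG x h (hsF hx2)
        · obtain ⟨g, hgi, hge⟩ := h
          obtain ⟨g', hg'D, hg'e⟩ := hx2
          have : g = g' := hfresh.1 (hiG hgi) (hD hg'D) (hge.trans hg'e.symm)
          exact (hDun g' hg'D a (List.mem_cons_self)).1 (this ▸ hiAdd hgi)
      · rcases hx2 with hx2 | hx2
        · exact hfr (a.del ∩ Gbar) (inter_subset_right) x h (hsF hx2)
        · obtain ⟨g, hgi, hge⟩ := h
          obtain ⟨g', hg'D, hg'e⟩ := hx2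
          have : g = g' := hfresh.1 hgi.2 (hD hg'D) (hge.trans hg'e.symm)
          exact (hDun g' hg'D a (List.mem_cons_self)).2 (this ▸ hgi.1)
    have hap' : a'.Applicable (s ∪ commit '' D) :=
      ⟨fun x hx => Or.inl (hap1 hx), hap'2⟩
    -- state equality
    have hDnotdel : ∀ x ∈ commit '' D, x ∉ a.del := by
      intro x hx hxd
      exact hfr D hD x hx (hdelF hxd)
    have hstate : a'.apply (s ∪ commit '' D) = s₁ ∪ commit '' (D ∪ i) := by
      ext x
      have h1 := hDnotdel x
      simp only [ha'_def, StripsAction.apply, simAction, hs1, image_union, mem_union, mem_diff]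
      tauto
    -- recursive call
    have hDun' : ∀ g ∈ D ∪ i, ∀ b ∈ rest, g ∉ b.add ∧ g ∉ b.del := by
      rintro g (hg | hg) b hb
      · exact hDun g hg b (List.mem_cons_of_mem _ hb)
      · exact hg.2 b hb
    have hs1F : s₁ ⊆ T.F := by
      rintro x (hx | hx)
      · exact hsF hx.1
      · exact haddF hx
    obtain ⟨ih1, D', hDD', hD'G, hres, hgoal⟩ :=
      fwd_sim hwf hfresh rest s₁ (D ∪ i)
        (fun c hc => hA c (List.mem_cons_of_mem _ hc)) happ' hs1F
        (union_subset hD hiG) hDun'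
    refine ⟨⟨hap', by rw [hstate]; exact ih1⟩, D', subset_union_left.trans hDD', hD'G, ?_, ?_⟩
    · show seqResult (a'.apply (s ∪ commit '' D)) (fwd commit Gbar rest) = _
      rw [hstate]; exact hres
    · intro g hgG hgres
      rcases hgoal g hgG hgres with h | ⟨hgs1, hun⟩
      · exact Or.inl h
      · by_cases hga : g ∈ a.add
        · exact Or.inl (hDD' (Or.inr ⟨⟨hga, hgG⟩, hun⟩))
        · rcases hgs1 with hg | hg
          · refine Or.inr ⟨hg.1, ?_⟩
            intro b hb
            rcases List.mem_cons.mp hb with rfl | hb'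
            · exact ⟨hga, hg.2⟩
            · exact hun b hb'
          · exact absurd hg hga

lemma compiled_spec {T : StripsTask α} {commit : α → α} {a' a : StripsAction α}
    (h : CompiledFrom T commit a' a) :
    a ∈ T.A ∧ ∃ i ⊆ a.add ∩ pending T,
      a'.prePos = a.prePos ∧ a'.del = a.del ∧ a'.cost = a.cost ∧
      a'.add = a.add ∪ commit '' i ∧
      a.preNeg ∪ commit '' (a.del ∩ pending T) ⊆ a'.preNeg := by
  obtain ⟨hA, h | h | h | h⟩ := h
  · obtain ⟨hne, hdel0, i, hi, rfl⟩ := h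
    exact ⟨hA, i, hi, rfl, rfl, rfl, rfl, by
      rw [hdel0, image_empty, union_empty]; exact subset_union_left⟩
  · obtain ⟨hadd0, hne, rfl⟩ := h
    refine ⟨hA, ∅, by simp, rfl, rfl, rfl, by simp [forceCommitAction], subset_rfl⟩
  · obtain ⟨hne1, hne2, j, hj, rfl⟩ := h
    refine ⟨hA, j, hj, rfl, rfl, rfl, rfl, ?_⟩
    rintro x (hx | hx)
    · exact Or.inl (Or.inl hx)
    · exact Or.inr hx
  · obtain ⟨hadd0, hdel0, rfl⟩ := h
    refine ⟨hA, ∅, by simp, rfl, rfl, rfl, by simp, ?_⟩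
    rw [hdel0, image_empty, union_empty]

open Classical in
/-- Retraction of a compiled action to an original action. -/
noncomputable def retract (T : StripsTask α) (commit : α → α) (a' : StripsAction α) :
    StripsAction α :=
  if h : ∃ a, CompiledFrom T commit a' a then h.choose else a'

lemma retract_spec {T : StripsTask α} {commit : α → α} {a' : StripsAction α}
    (h : ∃ a, CompiledFrom T commit a' a) :
    CompiledFrom T commit a' (retract T commit a') := by
  rw [retract, dif_pos h]; exact h.choose_spec

lemma bwd_sim {T : StripsTask α} {commit : α → α}
    (hwf : T.WellFormed) (hfresh : FreshCommit T commit) :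
    ∀ (π' : List (StripsAction α)) (s X : Set α),
      (∀ a' ∈ π', ∃ a, CompiledFrom T commit a' a) →
      SeqApplicable (s ∪ X) π' → s ⊆ T.F → X ∩ T.F = ∅ →
      (∀ g ∈ pending T, commit g ∈ X → g ∈ s) →
      (∀ a ∈ π'.map (retract T commit), a ∈ T.A) ∧
      SeqApplicable s (π'.map (retract T commit)) ∧
      planCost (π'.map (retract T commit)) = planCost π' ∧
      ∃ X', seqResult (s ∪ X) π' = seqResult s (π'.map (retract T commit)) ∪ X' ∧
        X' ∩ T.F = ∅ ∧ seqResult s (π'.map (retract T commit)) ⊆ T.F ∧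
        (∀ g ∈ pending T, commit g ∈ X' →
          g ∈ seqResult s (π'.map (retract T commit)))
  | [], s, X, hmem, happ, hsF, hXF, hsound => by
    refine ⟨by simp, trivial, rfl, X, rfl, hXF, hsF, hsound⟩
  | a' :: rest, s, X, hmem, happ, hsF, hXF, hsound => by
    have hc := retract_spec (hmem a' (List.mem_cons_self))
    set a := retract T commit a' with ha_def
    obtain ⟨haA, i, hiSub, hpre, hdel, hcost, haddeq, hpreNeg⟩ := compiled_spec hc
    obtain ⟨hpreP, hpreN, haddF, hdelF, hadddel⟩ := hwf.2.2.2.2 a haA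
    obtain ⟨⟨hap1, hap2⟩, happ'⟩ := happ
    rw [eq_empty_iff_forall_notMem] at hap2 hXF
    have hiG : i ⊆ pending T := hiSub.trans inter_subset_right
    -- applicability of a in s
    have hap1' : a.prePos ⊆ s := by
      intro x hx
      rcases hap1 (hpre ▸ hx) with h | h
      · exact h
      · exact absurd ⟨h, hpreP hx⟩ (hXF x)
    have hap2' : a.preNeg ∩ s = ∅ := by
      rw [eq_empty_iff_forall_notMem]
      rintro x ⟨hx1, hx2⟩
      exact hap2 x ⟨hpreNeg (Or.inl hx1), Or.inl hx2⟩
    -- state decomposition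
    set s₁ := a.apply s with hs1
    set X₁ := (X \ a.del) ∪ commit '' i with hX1
    have hstate : a'.apply (s ∪ X) = s₁ ∪ X₁ := by
      ext x
      simp only [StripsAction.apply, hdel, haddeq, hs1, hX1, mem_union, mem_diff]
      tauto
    have hs1F : s₁ ⊆ T.F := by
      rintro x (hx | hx)
      · exact hsF hx.1
      · exact haddF hx
    have hX1F : X₁ ∩ T.F = ∅ := by
      rw [eq_empty_iff_forall_notMem]
      rintro x ⟨hx1, hx2⟩
      rcases hx1 with hx | hx
      · exact hXF x ⟨hx.1, hx2⟩
      · obtain ⟨g, hg, rfl⟩ := hx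
        exact hfresh.2 g (hiG hg) hx2
    have hsound1 : ∀ g ∈ pending T, commit g ∈ X₁ → g ∈ s₁ := by
      intro g hgG hg
      rcases hg with hg | hg
      · have hgs : g ∈ s := hsound g hgG hg.1
        by_cases hgd : g ∈ a.del
        · exact (hap2 (commit g)
            ⟨hpreNeg (Or.inr ⟨g, ⟨hgd, hgG⟩, rfl⟩), Or.inr hg.1⟩).elim
        · exact Or.inl ⟨hgs, hgd⟩
      · have := mem_of_commit_mem hfresh hiG hgG hg
        exact Or.inr (hiSub this).1
    obtain ⟨ihmem, ihapp, ihcost, X', ihres, ihXF, ihresF, ihsound⟩ :=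
      bwd_sim hwf hfresh rest s₁ X₁
        (fun c hc => hmem c (List.mem_cons_of_mem _ hc))
        (by rw [← hstate]; exact happ') hs1F hX1F hsound1
    refine ⟨?_, ⟨⟨hap1', hap2'⟩, ihapp⟩, ?_, X', ?_, ihXF, ihresF, ihsound⟩
    · intro b hb
      rcases List.mem_cons.mp hb with rfl | hb'
      · exact haA
      · exact ihmem b hb'
    · simp only [List.map_cons, planCost, List.sum_cons] at ihcost ⊢
      rw [← ha_def, hcost]
      exact congrArg (a.cost + ·) ihcost
    · show seqResult (a'.apply (s ∪ X)) rest = _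
      rw [hstate]; exact ihres

end CommitAux

/-- Corollary (forward optimality preservation): if `π` optimally solves `P`, then
there exists a plan `π'` optimally solving `P_c`, with `c(π') = c(π)`. -/
theorem commit_compilation_forward_optimal {α : Type*} (T : StripsTask α) (commit : α → α)
    (hwf : T.WellFormed) (hfresh : FreshCommit T commit)
    (π : List (StripsAction α)) (hopt : T.OptimalPlan π) :
    ∃ π' : List (StripsAction α), (commitTask T commit).OptimalPlan π' ∧
      planCost π' = planCost π := by
  obtain ⟨⟨hmem, happ, hgoal⟩, hoptmin⟩ := hopt
  have hIF : T.I ⊆ T.F := hwf.2.2.1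
  have hGF : T.G ⊆ T.F := hwf.2.2.2.1
  -- forward construction
  obtain ⟨happ', D', hDD', hD'G, hres, hgoal'⟩ := by
    have h := fwd_sim hwf hfresh π T.I ∅ hmem happ hIF (empty_subset _) (by simp)
    rwa [image_empty, union_empty] at h
  have hGsub : pending T ⊆ D' := by
    intro g hg
    rcases hgoal' g hg (hgoal hg.1.1) with h | h
    · exact h
    · exact absurd h.1 hg.1.2
  have hplan' : (commitTask T commit).IsPlan (fwd commit (pending T) π) := by
    refine ⟨fwd_mem_all π hmem, happ', ?_⟩
    show T.G \ pending T ∪ commit '' pending T ⊆ seqResult T.I (fwd commit (pending T) π)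
    rw [hres]
    rintro x (hx | hx)
    · exact Or.inl (hgoal hx.1)
    · exact Or.inr (image_mono hGsub hx)
  refine ⟨fwd commit (pending T) π, ⟨hplan', ?_⟩, fwd_cost commit (pending T) π⟩
  -- optimality via the backward translation
  intro π₂ hπ₂
  obtain ⟨hmem₂, happ₂, hgoal₂⟩ := hπ₂
  obtain ⟨ihmem, ihapp, ihcost, X', ihres, ihXF, ihresF, ihsound⟩ := by
    have h := bwd_sim hwf hfresh π₂ T.I ∅ hmem₂ (by rw [union_empty]; exact happ₂)
      hIF (by simp) (by simp)
    rwa [union_empty] at h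
  have hplan₃ : T.IsPlan (π₂.map (retract T commit)) := by
    refine ⟨ihmem, ihapp, ?_⟩
    intro g hg
    rw [eq_empty_iff_forall_notMem] at ihXF
    by_cases hgp : g ∈ pending T
    · have hcg : commit g ∈ seqResult T.I π₂ :=
        hgoal₂ (Or.inr ⟨g, hgp, rfl⟩)
      rw [ihres] at hcg
      rcases hcg with h | h
      · exact absurd (ihresF h) (hfresh.2 g hgp)
      · exact ihsound g hgp h
    · have hcg : g ∈ seqResult T.I π₂ := hgoal₂ (Or.inl ⟨hg, hgp⟩)
      rw [ihres] at hcg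
      rcases hcg with h | h
      · exact h
      · exact absurd ⟨h, hGF hg⟩ (ihXF g)
  calc planCost (fwd commit (pending T) π) = planCost π := fwd_cost _ _ _
    _ ≤ planCost (π₂.map (retract T commit)) := hoptmin _ hplan₃
    _ = planCost π₂ := ihcost
end

section
/- Backward optimality preservation: if a plan π' optimally solves the commit task P_c, then the mapped sequence ρ(π'), obtained by replacing each action of π' by its original counterpart, optimally solves the original STRIPS planning task P. -/
variable {α : Type*}

/-! ### Auxiliary lemmas -/

lemma strips_ext {a b : StripsAction α} (h1 : a.prePos = b.prePos) (h2 : a.preNeg = b.preNeg)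
    (h3 : a.add = b.add) (h4 : a.del = b.del) (h5 : a.cost = b.cost) : a = b := by
  cases a; cases b; simp_all

/-- Every compiled action is exactly a `simAction` for some `i ⊆ add(a) ∩ Ḡ`. -/
lemma compiledFrom_iff (T : StripsTask α) (commit : α → α) (a' a : StripsAction α) :
    CompiledFrom T commit a' a ↔
      a ∈ T.A ∧ ∃ i ⊆ a.add ∩ pending T, a' = simAction commit (pending T) a i := by
  constructor
  · rintro ⟨hA, h | h | h | h⟩
    · obtain ⟨hne, hdel, i, hi, rfl⟩ := h
      exact ⟨hA, i, hi, strips_ext rfl (by simp [commitAction, simAction, hdel]) rfl rfl rfl⟩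
    · obtain ⟨hadd, hne, rfl⟩ := h
      exact ⟨hA, ∅, by simp, strips_ext rfl (by simp [forceCommitAction, simAction])
        (by simp [forceCommitAction, simAction]) rfl rfl⟩
    · obtain ⟨h1, h2, i, hi, rfl⟩ := h
      exact ⟨hA, i, hi, rfl⟩
    · obtain ⟨hadd, hdel, rfl⟩ := h
      exact ⟨hA, ∅, by simp, strips_ext rfl (by simp [simAction, hdel])
        (by simp [simAction]) rfl rfl⟩
  · rintro ⟨hA, i, hi, rfl⟩
    refine ⟨hA, ?_⟩
    by_cases hadd : a.add ∩ pending T = ∅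
    · have hie : i = ∅ := by rw [hadd] at hi; exact Set.subset_empty_iff.mp hi
      by_cases hdel : a.del ∩ pending T = ∅
      · exact Or.inr (Or.inr (Or.inr ⟨hadd, hdel,
          strips_ext rfl (by simp [simAction, hie, hdel]) (by simp [simAction, hie]) rfl rfl⟩))
      · exact Or.inr (Or.inl ⟨hadd, hdel,
          strips_ext rfl (by simp [simAction, forceCommitAction, hie])
            (by simp [simAction, forceCommitAction, hie]) rfl rfl⟩)
    · by_cases hdel : a.del ∩ pending T = ∅
      · exact Or.inl ⟨hadd, hdel, i, hi,
          strips_ext rfl (by simp [simAction, commitAction, hdel])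
            (by simp [simAction, commitAction]) rfl rfl⟩
      · exact Or.inr (Or.inr (Or.inl ⟨hadd, hdel, i, hi, rfl⟩))

lemma persist_mem {x : α} : ∀ (μ : List (StripsAction α)) (s : Set α),
    x ∈ s → (∀ b ∈ μ, x ∉ b.del) → x ∈ seqResult s μ
  | [], _, hx, _ => hx
  | a :: μ, s, hx, h =>
      persist_mem μ _ (Or.inl ⟨hx, h a (List.mem_cons_self)⟩)
        (fun b hb => h b (List.mem_cons_of_mem _ hb))

lemma persist_not_mem {x : α} : ∀ (μ : List (StripsAction α)) (s : Set α),
    x ∉ s → (∀ b ∈ μ, x ∉ b.add) → x ∉ seqResult s μ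
  | [], _, hx, _ => hx
  | a :: μ, s, hx, h => by
      refine persist_not_mem μ _ ?_ (fun b hb => h b (List.mem_cons_of_mem _ hb))
      rintro (⟨hs, -⟩ | hadd)
      · exact hx hs
      · exact h a (List.mem_cons_self) hadd

lemma forall₂_mem_A {T : StripsTask α} {commit : α → α} :
    ∀ {π' π : List (StripsAction α)}, List.Forall₂ (CompiledFrom T commit) π' π →
      ∀ a ∈ π, a ∈ T.A := by
  intro π' π hmap
  induction hmap with
  | nil => intro a ha; simp at ha
  | cons h _ ih =>
      intro b hb
      rcases List.mem_cons.mp hb with rfl | hb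
      · exact h.1
      · exact ih b hb

lemma forall₂_cost {T : StripsTask α} {commit : α → α} :
    ∀ {π' π : List (StripsAction α)}, List.Forall₂ (CompiledFrom T commit) π' π →
      planCost π' = planCost π := by
  intro π' π hmap
  induction hmap with
  | nil => rfl
  | cons h _ ih =>
      obtain ⟨-, i, -, rfl⟩ := (compiledFrom_iff _ _ _ _).mp h
      simp [planCost] at ih ⊢
      rw [ih]; rfl

/-- Backward simulation invariant lemma. -/
lemma backward_aux (T : StripsTask α) (commit : α → α)
    (hwf : T.WellFormed) (hfresh : FreshCommit T commit) :
    ∀ {π' π : List (StripsAction α)}, List.Forall₂ (CompiledFrom T commit) π' π →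
    ∀ {s s' : Set α}, s ⊆ T.F → s ⊆ s' → (∀ x ∈ s', x ∈ T.F → x ∈ s) →
    (∀ g ∈ pending T, commit g ∈ s' → g ∈ s) → SeqApplicable s' π' →
    SeqApplicable s π ∧
    (∀ x ∈ seqResult s' π', x ∈ T.F → x ∈ seqResult s π) ∧
    (∀ g ∈ pending T, commit g ∈ seqResult s' π' → g ∈ seqResult s π) := by
  intro π' π hmap
  induction hmap with
  | nil =>
      intro s s' _ _ hF hcg _
      exact ⟨trivial, hF, hcg⟩
  | @cons a' a π' π h hmap ih =>
      intro s s' hsF hss hF hcg happ'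
      obtain ⟨hA, i, hi, rfl⟩ := (compiledFrom_iff _ _ _ _).mp h
      obtain ⟨-, -, -, -, hact⟩ := hwf
      obtain ⟨hp1, hp2, hp3, hp4, -⟩ := hact a hA
      obtain ⟨⟨hpre, hneg⟩, happ'⟩ := happ'
      have hneg' : ∀ x ∈ (simAction commit (pending T) a i).preNeg, x ∉ s' :=
        fun x hx hxs => Set.eq_empty_iff_forall_notMem.mp hneg x ⟨hx, hxs⟩
      have hisub : i ⊆ pending T := fun g hg => ((hi hg).2)
      have hiadd : i ⊆ a.add := fun g hg => ((hi hg).1)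
      -- applicability of the original action
      have haApp : a.Applicable s := by
        constructor
        · intro x hx
          exact hF x (hpre hx) (hp1 hx)
        · apply Set.eq_empty_iff_forall_notMem.mpr
          rintro x ⟨hx1, hx2⟩
          exact hneg' x (Or.inl (Or.inl hx1)) (hss hx2)
      -- new state invariants
      have happly : (simAction commit (pending T) a i).apply s'
          = (s' \ a.del) ∪ (a.add ∪ commit '' i) := rfl
      have hsF₁ : a.apply s ⊆ T.F := by
        rintro x (⟨hx, -⟩ | hx)
        · exact hsF hx
        · exact hp3 hx
      have hss₁ : a.apply s ⊆ (simAction commit (pending T) a i).apply s' := by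
        rw [happly]
        rintro x (⟨hx, hnd⟩ | hx)
        · exact Or.inl ⟨hss hx, hnd⟩
        · exact Or.inr (Or.inl hx)
      have hF₁ : ∀ x ∈ (simAction commit (pending T) a i).apply s',
          x ∈ T.F → x ∈ a.apply s := by
        rw [happly]
        rintro x (⟨hx, hnd⟩ | hx | hx) hxF
        · exact Or.inl ⟨hF x hx hxF, hnd⟩
        · exact Or.inr hx
        · obtain ⟨g, hg, rfl⟩ := hx
          exact absurd hxF (hfresh.2 g (hisub hg))
      have hcg₁ : ∀ g ∈ pending T, commit g ∈ (simAction commit (pending T) a i).apply s'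
          → g ∈ a.apply s := by
        rw [happly]
        rintro g hgp (⟨hx, -⟩ | hx | hx)
        · -- commit g was already there
          have hgs : g ∈ s := hcg g hgp hx
          by_cases hgd : g ∈ a.del
          · exact absurd hx (hneg' _ (Or.inr ⟨g, ⟨hgd, hgp⟩, rfl⟩))
          · exact Or.inl ⟨hgs, hgd⟩
        · exact absurd (hp3 hx) (hfresh.2 g hgp)
        · obtain ⟨g₂, hg₂, he⟩ := hx
          have : g₂ = g := hfresh.1 (hisub hg₂) hgp he
          subst this
          exact Or.inr (hiadd hg₂)
      obtain ⟨ih1, ih2, ih3⟩ := ih hsF₁ hss₁ hF₁ hcg₁ happ'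
      exact ⟨⟨haApp, ih1⟩, ih2, ih3⟩

/-- The compilation of a plan of the original task. -/
def compileList (T : StripsTask α) (commit : α → α) : List (StripsAction α) →
    List (StripsAction α)
  | [] => []
  | a :: μ => simAction commit (pending T) a
      {g | g ∈ a.add ∧ g ∈ pending T ∧ ∀ b ∈ μ, g ∉ b.add ∧ g ∉ b.del} ::
        compileList T commit μ

lemma compileList_mem (T : StripsTask α) (commit : α → α) :
    ∀ (μ : List (StripsAction α)), (∀ a ∈ μ, a ∈ T.A) →
      ∀ a' ∈ compileList T commit μ, a' ∈ (commitTask T commit).A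
  | [], _, a', ha' => by simp [compileList] at ha'
  | a :: μ, hA, a', ha' => by
      rcases List.mem_cons.mp ha' with rfl | hb
      · refine ⟨a, (compiledFrom_iff _ _ _ _).mpr ⟨hA a (List.mem_cons_self), _, ?_, rfl⟩⟩
        rintro g ⟨h1, h2, -⟩
        exact ⟨h1, h2⟩
      · exact compileList_mem T commit μ (fun b hb => hA b (List.mem_cons_of_mem _ hb)) a' hb

lemma compileList_del (T : StripsTask α) (commit : α → α) :
    ∀ (μ : List (StripsAction α)), ∀ a' ∈ compileList T commit μ, ∃ a ∈ μ, a'.del = a.del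
  | [], a', ha' => by simp [compileList] at ha'
  | a :: μ, a', ha' => by
      rcases List.mem_cons.mp ha' with rfl | hb
      · exact ⟨a, List.mem_cons_self, rfl⟩
      · obtain ⟨b, hb1, hb2⟩ := compileList_del T commit μ a' hb
        exact ⟨b, List.mem_cons_of_mem _ hb1, hb2⟩

lemma compileList_cost (T : StripsTask α) (commit : α → α) :
    ∀ (μ : List (StripsAction α)), planCost (compileList T commit μ) = planCost μ
  | [] => rfl
  | a :: μ => by
      simp only [compileList, planCost, List.map_cons, List.sum_cons]
      have := compileList_cost T commit μ
      simp only [planCost] at this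
      rw [this]; rfl

/-- Forward simulation lemma: a plan of `P` compiles to a plan of `P_c`. -/
lemma forward_aux (T : StripsTask α) (commit : α → α)
    (hwf : T.WellFormed) (hfresh : FreshCommit T commit) :
    ∀ (μ : List (StripsAction α)) (s s' : Set α), s ⊆ T.F → s ⊆ s' →
    (∀ x ∈ s', x ∉ s → ∃ g, g ∈ pending T ∧ x = commit g ∧
        ∀ b ∈ μ, g ∉ b.add ∧ g ∉ b.del) →
    (∀ a ∈ μ, a ∈ T.A) → SeqApplicable s μ →
    SeqApplicable s' (compileList T commit μ) ∧
    seqResult s μ ⊆ seqResult s' (compileList T commit μ) ∧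
    (∀ g ∈ pending T, g ∈ seqResult s μ →
      (g ∉ s ∨ ∃ b ∈ μ, g ∈ b.add ∨ g ∈ b.del) →
      commit g ∈ seqResult s' (compileList T commit μ))
  | [], s, s', hsF, hss, hextra, hA, happ => by
      refine ⟨trivial, hss, ?_⟩
      rintro g hgp hgs (hns | ⟨b, hb, -⟩)
      · exact absurd hgs hns
      · simp at hb
  | a :: μ, s, s', hsF, hss, hextra, hA, happ => by
      obtain ⟨haApp, happ⟩ := happ
      have haA : a ∈ T.A := hA a (List.mem_cons_self)
      have hact := hwf.2.2.2.2
      obtain ⟨hp1, hp2, hp3, hp4, -⟩ := hact a haA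
      set i : Set α := {g | g ∈ a.add ∧ g ∈ pending T ∧ ∀ b ∈ μ, g ∉ b.add ∧ g ∉ b.del}
        with hidef
      have hnegA : a.preNeg ∩ s = ∅ := haApp.2
      -- applicability of the compiled action in s'
      have ha'App : (simAction commit (pending T) a i).Applicable s' := by
        constructor
        · exact fun x hx => hss (haApp.1 hx)
        · apply Set.eq_empty_iff_forall_notMem.mpr
          rintro x ⟨hx1, hx2⟩
          rcases hx1 with (hx1 | hx1) | hx1
          · by_cases hxs : x ∈ s
            · exact Set.eq_empty_iff_forall_notMem.mp hnegA x ⟨hx1, hxs⟩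
            · obtain ⟨g, hgp, rfl, -⟩ := hextra x hx2 hxs
              exact hfresh.2 g hgp (hp2 hx1)
          · obtain ⟨g, hg, rfl⟩ := hx1
            by_cases hxs : commit g ∈ s
            · exact hfresh.2 g hg.2.1 (hsF hxs)
            · obtain ⟨g₂, hg₂p, he, hunt⟩ := hextra _ hx2 hxs
              have : g = g₂ := hfresh.1 hg.2.1 hg₂p he
              subst this
              exact (hunt a (List.mem_cons_self)).1 hg.1
          · obtain ⟨g, hg, rfl⟩ := hx1
            by_cases hxs : commit g ∈ s
            · exact hfresh.2 g hg.2 (hsF hxs)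
            · obtain ⟨g₂, hg₂p, he, hunt⟩ := hextra _ hx2 hxs
              have : g = g₂ := hfresh.1 hg.2 hg₂p he
              subst this
              exact (hunt a (List.mem_cons_self)).2 hg.1
      -- invariants for the recursive call
      have happly : (simAction commit (pending T) a i).apply s'
          = (s' \ a.del) ∪ (a.add ∪ commit '' i) := rfl
      have hsF₁ : a.apply s ⊆ T.F := by
        rintro x (⟨hx, -⟩ | hx)
        · exact hsF hx
        · exact hp3 hx
      have hss₁ : a.apply s ⊆ (simAction commit (pending T) a i).apply s' := by
        rw [happly]
        rintro x (⟨hx, hnd⟩ | hx)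
        · exact Or.inl ⟨hss hx, hnd⟩
        · exact Or.inr (Or.inl hx)
      have hextra₁ : ∀ x ∈ (simAction commit (pending T) a i).apply s', x ∉ a.apply s →
          ∃ g, g ∈ pending T ∧ x = commit g ∧ ∀ b ∈ μ, g ∉ b.add ∧ g ∉ b.del := by
        rw [happly]
        rintro x (⟨hx, hnd⟩ | hx | hx) hxn
        · have hxs : x ∉ s := fun hxs => hxn (Or.inl ⟨hxs, hnd⟩)
          obtain ⟨g, hgp, rfl, hunt⟩ := hextra x hx hxs
          exact ⟨g, hgp, rfl, fun b hb => hunt b (List.mem_cons_of_mem _ hb)⟩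
        · exact absurd (Or.inr hx) hxn
        · obtain ⟨g, hg, rfl⟩ := hx
          exact ⟨g, hg.2.1, rfl, hg.2.2⟩
      have hA₁ : ∀ b ∈ μ, b ∈ T.A := fun b hb => hA b (List.mem_cons_of_mem _ hb)
      obtain ⟨ih1, ih2, ih3⟩ := forward_aux T commit hwf hfresh μ (a.apply s)
        ((simAction commit (pending T) a i).apply s') hsF₁ hss₁ hextra₁ hA₁ happ
      refine ⟨⟨ha'App, ih1⟩, ih2, ?_⟩
      -- commit goal achievement
      intro g hgp hgres hdisj
      by_cases htouch : ∃ b ∈ μ, g ∈ b.add ∨ g ∈ b.del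
      · exact ih3 g hgp hgres (Or.inr htouch)
      · push_neg at htouch
        by_cases hga : g ∈ a.add
        · -- g is committed at this step and persists
          have hgi : g ∈ i := ⟨hga, hgp, fun b hb => ⟨(htouch b hb).1, (htouch b hb).2⟩⟩
          have hcs : commit g ∈ (simAction commit (pending T) a i).apply s' := by
            rw [happly]
            exact Or.inr (Or.inr ⟨g, hgi, rfl⟩)
          apply persist_mem _ _ hcs
          intro b hb hcd
          obtain ⟨b₀, hb₀, he⟩ := compileList_del T commit μ b hb
          rw [he] at hcd
          obtain ⟨-, -, -, hd4, -⟩ := hact b₀ (hA₁ b₀ hb₀)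
          exact hfresh.2 g hgp (hd4 hcd)
        · -- g must already be in s and untouched: contradiction with hgres
          exfalso
          have hgs₁ : g ∈ a.apply s := by
            by_contra hgn
            exact persist_not_mem μ _ hgn (fun b hb => (htouch b hb).1) hgres
          rcases hgs₁ with ⟨hgs, hgd⟩ | hga'
          · rcases hdisj with hns | ⟨b, hb, hbt⟩
            · exact hns hgs
            · rcases List.mem_cons.mp hb with rfl | hb
              · rcases hbt with h | h
                · exact hga h
                · exact hgd h
              · rcases hbt with h | h
                · exact (htouch b hb).1 h
                · exact (htouch b hb).2 h
          · exact hga hga'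

/-- Backward optimality preservation: if `π'` optimally solves `P_c`, then the mapped
sequence `ρ(π')` optimally solves `P`. -/
theorem commit_compilation_backward_optimal {α : Type*} (T : StripsTask α) (commit : α → α)
    (hwf : T.WellFormed) (hfresh : FreshCommit T commit)
    (π' π : List (StripsAction α)) (hopt : (commitTask T commit).OptimalPlan π')
    (hmap : List.Forall₂ (CompiledFrom T commit) π' π) :
    T.OptimalPlan π := by
  obtain ⟨⟨hmem', happ', hgoal'⟩, hmin⟩ := hopt
  have hwf' : T.WellFormed := hwf
  obtain ⟨hFfin, hAfin, hIF, hGF, hact⟩ := hwf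
  have hcgI : ∀ g ∈ pending T, commit g ∈ T.I → g ∈ T.I :=
    fun g hg hc => absurd (hIF hc) (hfresh.2 g hg)
  obtain ⟨bapp, bF, bcg⟩ := backward_aux T commit hwf' hfresh hmap hIF
    (subset_refl T.I) (fun x hx _ => hx) hcgI happ'
  have hplan : T.IsPlan π := by
    refine ⟨forall₂_mem_A hmap, bapp, ?_⟩
    intro x hxG
    by_cases hxp : x ∈ pending T
    · exact bcg x hxp (hgoal' (Or.inr ⟨x, hxp, rfl⟩))
    · exact bF x (hgoal' (Or.inl ⟨hxG, hxp⟩)) (hGF hxG)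
  have hc : planCost π' = planCost π := forall₂_cost hmap
  refine ⟨hplan, ?_⟩
  intro π₂ hplan₂
  obtain ⟨hm₂, ha₂, hg₂⟩ := hplan₂
  obtain ⟨app₂, sub₂, c₂⟩ := forward_aux T commit hwf' hfresh π₂ T.I T.I hIF
    (subset_refl T.I) (fun x hx hnx => absurd hx hnx) hm₂ ha₂
  have hplan₂' : (commitTask T commit).IsPlan (compileList T commit π₂) := by
    refine ⟨compileList_mem T commit π₂ hm₂, app₂, ?_⟩
    rintro x (⟨hxG, hxp⟩ | ⟨g, hgp, rfl⟩)
    · exact sub₂ (hg₂ hxG)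
    · exact c₂ g hgp (hg₂ hgp.1.1) (Or.inl hgp.1.2)
  calc planCost π = planCost π' := hc.symm
    _ ≤ planCost (compileList T commit π₂) := hmin _ hplan₂'
    _ = planCost π₂ := compileList_cost T commit π₂
end

section
/- Goal correspondence: for every action sequence π' over A_c that is applicable in the initial state I of the commit task P_c, if G_c ⊆ Γ(I, π') then G ⊆ Γ(I, π'); i.e., any state reached from I in P_c that satisfies the compiled goal G_c also satisfies the original goal G. -/
variable {α : Type*}

/-- Invariant preservation: in any state reachable from a state satisfying the
commit invariant, `commit g ∈ s → g ∈ s` for pending `g`. -/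
lemma commit_invariant {α : Type*} (T : StripsTask α) (commit : α → α)
    (hwf : T.WellFormed) (hfresh : FreshCommit T commit) :
    ∀ (π' : List (StripsAction α)) (s : Set α),
      (∀ a' ∈ π', a' ∈ (commitTask T commit).A) →
      SeqApplicable s π' →
      (∀ g ∈ pending T, commit g ∈ s → g ∈ s) →
      ∀ g ∈ pending T, commit g ∈ seqResult s π' → g ∈ seqResult s π' := by
  intro π'
  induction π' with
  | nil => intro s _ _ hinv g hg hcg; exact hinv g hg hcg
  | cons a' rest ih =>
    intro s hmem happ hinv
    obtain ⟨happ1, happ2⟩ := happ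
    refine ih (a'.apply s) (fun b hb => hmem b (List.mem_cons_of_mem _ hb)) happ2 ?_
    -- step: invariant preserved by one compiled action
    obtain ⟨a, ha, hcase⟩ := hmem a' List.mem_cons_self
    obtain ⟨_, _, haddF, hdelF, _⟩ := hwf.2.2.2.2 a ha
    intro g hg hcg
    have hgF : commit g ∉ T.F := hfresh.2 g hg
    have hcga : commit g ∉ a.add := fun h => hgF (haddF h)
    have hcgd : commit g ∉ a.del := fun h => hgF (hdelF h)
    -- helper: from `commit g ∈ commit '' i` with `i ⊆ pending T`, get `g ∈ i`
    have himg : ∀ i : Set α, i ⊆ pending T → commit g ∈ commit '' i → g ∈ i := by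
      intro i hi ⟨x, hx, hxe⟩
      have := hfresh.1 (hi hx) hg hxe
      rwa [this] at hx
    rcases hcase with ⟨-, hdel0, i, hi, rfl⟩ | ⟨-, -, rfl⟩ | ⟨-, -, j, hj, rfl⟩ | ⟨hadd0, hdel0, rfl⟩
    · -- commitAction
      simp only [StripsAction.apply, commitAction, Set.union_assoc] at hcg ⊢
      rcases hcg with hcg | hcg | hcg
      · have hgs : g ∈ s := hinv g hg hcg.1
        have hgnd : g ∉ a.del := fun h =>
          Set.eq_empty_iff_forall_notMem.mp hdel0 g ⟨h, hg⟩
        exact Or.inl ⟨hgs, hgnd⟩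
      · exact absurd hcg hcga
      · have hgi : g ∈ i := himg i (fun x hx => (hi hx).2) hcg
        exact Or.inr (Or.inl (hi hgi).1)
    · -- forceCommitAction
      simp only [StripsAction.apply, forceCommitAction] at hcg ⊢
      rcases hcg with hcg | hcg
      · have hgs : g ∈ s := hinv g hg hcg.1
        have hgnd : g ∉ a.del := by
          intro h
          have hmem : commit g ∈ (forceCommitAction commit (pending T) a).preNeg :=
            Or.inr ⟨g, ⟨h, hg⟩, rfl⟩
          exact Set.eq_empty_iff_forall_notMem.mp happ1.2 (commit g) ⟨hmem, hcg.1⟩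
        exact Or.inl ⟨hgs, hgnd⟩
      · exact absurd hcg hcga
    · -- simAction
      simp only [StripsAction.apply, simAction] at hcg ⊢
      rcases hcg with hcg | hcg | hcg
      · have hgs : g ∈ s := hinv g hg hcg.1
        have hgnd : g ∉ a.del := by
          intro h
          have hmem : commit g ∈ (simAction commit (pending T) a j).preNeg :=
            Or.inr ⟨g, ⟨h, hg⟩, rfl⟩
          exact Set.eq_empty_iff_forall_notMem.mp happ1.2 (commit g) ⟨hmem, hcg.1⟩
        exact Or.inl ⟨hgs, hgnd⟩
      · exact absurd hcg hcga
      · have hgj : g ∈ j := himg j (fun x hx => (hj hx).2) hcg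
        exact Or.inr (Or.inl (hj hgj).1)
    · -- unchanged action
      simp only [StripsAction.apply] at hcg ⊢
      rcases hcg with hcg | hcg
      · have hgs : g ∈ s := hinv g hg hcg.1
        have hgnd : g ∉ a'.del := fun h =>
          Set.eq_empty_iff_forall_notMem.mp hdel0 g ⟨h, hg⟩
        exact Or.inl ⟨hgs, hgnd⟩
      · exact absurd hcg hcga

/-- Goal correspondence: any state reached from `I` by a sequence over `A_c` that
satisfies the compiled goal `G_c` also satisfies the original goal `G`. -/
theorem commit_compilation_goal_correspondence {α : Type*} (T : StripsTask α) (commit : α → α)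
    (hwf : T.WellFormed) (hfresh : FreshCommit T commit)
    (π' : List (StripsAction α)) (hmem : ∀ a' ∈ π', a' ∈ (commitTask T commit).A)
    (happ : SeqApplicable (commitTask T commit).I π')
    (hgoal : (commitTask T commit).G ⊆ seqResult (commitTask T commit).I π') :
    T.G ⊆ seqResult (commitTask T commit).I π' := by
  intro g hgG
  by_cases hp : g ∈ pending T
  · have hinv0 : ∀ g ∈ pending T, commit g ∈ (commitTask T commit).I →
        g ∈ (commitTask T commit).I := by
      intro g' hg' hcg'
      exact absurd (hwf.2.2.1 hcg') (hfresh.2 g' hg')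
    have hcg : commit g ∈ seqResult (commitTask T commit).I π' :=
      hgoal (Or.inr ⟨g, hp, rfl⟩)
    exact commit_invariant T commit hwf hfresh π' _ hmem happ hinv0 g hp hcg
  · exact hgoal (Or.inl ⟨hgG, hp⟩)
end
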